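/- Let H_2 be an r_2-regular graph on m − 2 vertices with Q-eigenvalues q_1(H_2) ≤ … ≤ q_{m−2}(H_2) (so q_{m−2}(H_2) = 2r_2), and let H_{uv} = K_2 ∨ H_2 be the join of an edge uv with H_2. Then the multiset of signless Laplacian eigenvalues of H_{uv} is σ(Q(H_{uv})) = { q_j(H_2) + 2 : 1 ≤ j ≤ m − 3 } ∪ { m − 2, ζ, η }, where ζ, η are the two roots of (x − 2r_2 − 2)(x − m) − 2(m − 2) = 0. -/

import Mathlib

open Matrix BigOperators
open scoped Classical

/-- The adjacency matrix of a simple graph, with entries in `R`. -/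
noncomputable def adjMat (R : Type*) [Zero R] [One R] {V : Type*} [Fintype V]
    (G : SimpleGraph V) : Matrix V V R :=
  Matrix.of fun x y => if G.Adj x y then (1 : R) else 0

/-- The degree of a vertex. -/
noncomputable def gdeg {V : Type*} [Fintype V] (G : SimpleGraph V) (x : V) : ℕ :=
  (Finset.univ.filter fun y => G.Adj x y).card

/-- `G` is `r`-regular. -/
def IsReg {V : Type*} [Fintype V] (G : SimpleGraph V) (r : ℕ) : Prop :=
  ∀ x, gdeg G x = r

/-- The signless Laplacian matrix `Q(G) = D(G) + A(G)`. -/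
noncomputable def qMat (R : Type*) [AddMonoidWithOne R] {V : Type*} [Fintype V]
    (G : SimpleGraph V) : Matrix V V R :=
  Matrix.diagonal (fun x => (gdeg G x : R)) + adjMat R G

/-- The adjacency spectrum, as the multiset of real roots (with multiplicity) of the
characteristic polynomial of the (real symmetric) adjacency matrix. -/
noncomputable def aSpec {V : Type*} [Fintype V] (G : SimpleGraph V) : Multiset ℝ :=
  (adjMat ℝ G).charpoly.roots

/-- The signless Laplacian spectrum. -/
noncomputable def qSpec {V : Type*} [Fintype V] (G : SimpleGraph V) : Multiset ℝ :=
  (qMat ℝ G).charpoly.roots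

/-- The `M`-coronal `Γ_M(x) = 1ᵀ (xI − M)⁻¹ 1`, the sum of the entries of `(xI − M)⁻¹`. -/
noncomputable def coronal {n R : Type*} [Fintype n] [DecidableEq n] [Field R]
    (M : Matrix n n R) (x : R) : R :=
  ∑ i, ∑ j, ((x • (1 : Matrix n n R) - M)⁻¹) i j

/-- Embeds a `P × P` matrix as a `V × V` matrix supported on the image of `g`, zero elsewhere.
If the vertices of `V` are ordered listing the image of `g` first, this is `diag(M, 0)`. -/
noncomputable def embedMatrix {P V R : Type*} [Fintype P] [AddCommMonoid R]
    (g : P → V) (M : Matrix P P R) : Matrix V V R :=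
  Matrix.of fun x y => ∑ px : P, ∑ py : P, if x = g px ∧ y = g py then M px py else 0

/-- The graph `H − v` obtained by deleting the vertex `v`. -/
def delVert {W : Type*} (H : SimpleGraph W) (v : W) : SimpleGraph {w : W // w ≠ v} :=
  H.comap Subtype.val

/-- The graph `H − {u,v}` obtained by deleting the two vertices `u, v`. -/
def delVert2 {W : Type*} (H : SimpleGraph W) (u v : W) :
    SimpleGraph {w : W // w ≠ u ∧ w ≠ v} :=
  H.comap Subtype.val

/-- The join `G₁ ∨ G₂` of two vertex-disjoint graphs: their disjoint union together with all
edges between the two parts. -/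
def sgJoin {α β : Type*} (G₁ : SimpleGraph α) (G₂ : SimpleGraph β) : SimpleGraph (α ⊕ β) where
  Adj x y :=
    match x, y with
    | Sum.inl a, Sum.inl b => G₁.Adj a b
    | Sum.inl _, Sum.inr _ => True
    | Sum.inr _, Sum.inl _ => True
    | Sum.inr a, Sum.inr b => G₂.Adj a b
  symm := by
    refine ⟨?_⟩
    rintro (a | a) (b | b) h
    · exact h.symm
    · trivial
    · trivial
    · exact h.symm
  loopless := by
    refine ⟨?_⟩
    rintro (a | a) h
    · exact G₁.loopless.irrefl a h
    · exact G₂.loopless.irrefl a h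

/-- The graph `G[F, V_k, H_v]` with `k` pockets: take one copy of `F` and `k` disjoint copies
of `H` (with specified vertex `v`), identifying the vertex `v` of the `i`-th copy with the
vertex `f i` of `F`.  The `i`-th copy of `H − v` is carried by `{i} × {w // w ≠ v}`. -/
def pocketGraph {V W : Type*} (F : SimpleGraph V) (H : SimpleGraph W) (v : W)
    {k : ℕ} (f : Fin k ↪ V) : SimpleGraph (V ⊕ (Fin k × {w : W // w ≠ v})) where
  Adj x y :=
    match x, y with
    | Sum.inl a, Sum.inl b => F.Adj a b
    | Sum.inl a, Sum.inr (i, w) => a = f i ∧ H.Adj v w.1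
    | Sum.inr (i, w), Sum.inl a => a = f i ∧ H.Adj v w.1
    | Sum.inr (i, w), Sum.inr (j, w') => i = j ∧ H.Adj w.1 w'.1
  symm := by
    refine ⟨?_⟩
    rintro (a | ⟨i, w⟩) (b | ⟨j, w'⟩) h
    · exact h.symm
    · exact h
    · exact h
    · exact ⟨h.1.symm, h.2.symm⟩
  loopless := by
    refine ⟨?_⟩
    rintro (a | ⟨i, w⟩) h
    · exact F.loopless.irrefl a h
    · exact H.loopless.irrefl _ h.2

/-- The graph `G[F, E_k, H_{uv}]` with `k` edge-pockets: take one copy of `F` and `k` disjoint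
copies of `H` (with specified edge `uv`), pasting the edge `uv` of the `i`-th copy onto the
edge `e_i = (a i)(b i)` of `F` (identifying `u` with `a i` and `v` with `b i`).  The `i`-th
copy of `H − {u,v}` is carried by `{i} × {w // w ≠ u ∧ w ≠ v}`. -/
def edgePocketGraph {V W : Type*} (F : SimpleGraph V) (H : SimpleGraph W) (u v : W)
    {k : ℕ} (a b : Fin k → V) :
    SimpleGraph (V ⊕ (Fin k × {w : W // w ≠ u ∧ w ≠ v})) where
  Adj x y :=
    match x, y with
    | Sum.inl s, Sum.inl t => F.Adj s t
    | Sum.inl s, Sum.inr (i, w) => (s = a i ∧ H.Adj u w.1) ∨ (s = b i ∧ H.Adj v w.1)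
    | Sum.inr (i, w), Sum.inl s => (s = a i ∧ H.Adj u w.1) ∨ (s = b i ∧ H.Adj v w.1)
    | Sum.inr (i, w), Sum.inr (j, w') => i = j ∧ H.Adj w.1 w'.1
  symm := by
    refine ⟨?_⟩
    rintro (s | ⟨i, w⟩) (t | ⟨j, w'⟩) h
    · exact h.symm
    · exact h
    · exact h
    · exact ⟨h.1.symm, h.2.symm⟩
  loopless := by
    refine ⟨?_⟩
    rintro (s | ⟨i, w⟩) h
    · exact F.loopless.irrefl s h
    · exact H.loopless.irrefl _ h.2


section Helpers
open Polynomial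

lemma myEvalCharpoly {n : Type*} [Fintype n] [DecidableEq n] (M : Matrix n n ℝ) (x : ℝ) :
    M.charpoly.eval x = (x • (1 : Matrix n n ℝ) - M).det := by
  rw [Matrix.charpoly, ← Polynomial.coe_evalRingHom, RingHom.map_det]
  congr 1
  ext i j
  by_cases h : i = j <;>
    simp [h, charmatrix, Matrix.one_apply, Matrix.diagonal_apply, Matrix.smul_apply]

lemma myCharpolyDiagonal {n : Type*} [Fintype n] [DecidableEq n] (d : n → ℝ) :
    (Matrix.diagonal d).charpoly = ∏ i, (X - C (d i)) := by
  have h : charmatrix (Matrix.diagonal d) = Matrix.diagonal (fun i => X - C (d i)) := by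
    ext i j
    by_cases h : i = j <;> simp [h, Matrix.diagonal_apply]
  rw [Matrix.charpoly, h, Matrix.det_diagonal]

lemma myCharpolyConjUnitary {n : Type*} [Fintype n] [DecidableEq n]
    (U : Matrix.unitaryGroup n ℝ) (D : Matrix n n ℝ) :
    ((U : Matrix n n ℝ) * D * (star U : Matrix n n ℝ)).charpoly = D.charpoly := by
  set f : Matrix n n ℝ →+* Matrix n n ℝ[X] := (RingHom.mapMatrix (C : ℝ →+* ℝ[X])) with hf
  have hU : (U : Matrix n n ℝ) * (star U : Matrix n n ℝ) = 1 := by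
    simpa using U.2.2
  have hcomm : ∀ M : Matrix n n ℝ[X], Matrix.scalar n (X : ℝ[X]) * M
      = M * Matrix.scalar n (X : ℝ[X]) :=
    fun M => (Matrix.scalar_commute (X : ℝ[X]) (fun r => Commute.all _ _) M)
  have key : charmatrix ((U : Matrix n n ℝ) * D * (star U : Matrix n n ℝ))
      = f (U : Matrix n n ℝ) * charmatrix D * f (star U : Matrix n n ℝ) := by
    simp only [charmatrix]
    rw [Matrix.mul_sub, Matrix.sub_mul]
    congr 1
    · rw [← hcomm, Matrix.mul_assoc, ← _root_.map_mul, hU, _root_.map_one, Matrix.mul_one]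
    · simp only [hf, RingHom.mapMatrix_apply, ← Matrix.map_mul]
  rw [Matrix.charpoly, key, Matrix.det_mul, Matrix.det_mul, Matrix.charpoly]
  have h1 : (f (U : Matrix n n ℝ)).det * (f (star U : Matrix n n ℝ)).det = 1 := by
    rw [← Matrix.det_mul, ← _root_.map_mul, hU, _root_.map_one, Matrix.det_one]
  calc (f (U : Matrix n n ℝ)).det * (charmatrix D).det * (f (star U : Matrix n n ℝ)).det
      = (f (U : Matrix n n ℝ)).det * (f (star U : Matrix n n ℝ)).det * (charmatrix D).det := by
        ring
    _ = (charmatrix D).det := by rw [h1, one_mul]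

lemma mySymCharpoly {n : Type*} [Fintype n] [DecidableEq n] (A : Matrix n n ℝ)
    (hA : A.IsHermitian) :
    A.charpoly = ((Finset.univ.val.map hA.eigenvalues).map (fun r => X - C r)).prod := by
  have hst := hA.spectral_theorem
  have h1 : Matrix.diagonal ((RCLike.ofReal : ℝ → ℝ) ∘ hA.eigenvalues)
      = Matrix.diagonal hA.eigenvalues := by
    congr 1
  have hA2 : A = (hA.eigenvectorUnitary : Matrix n n ℝ) * Matrix.diagonal hA.eigenvalues
      * (star hA.eigenvectorUnitary : Matrix n n ℝ) := by rw [← h1]; exact hst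
  conv_lhs => rw [hA2]
  rw [myCharpolyConjUnitary, myCharpolyDiagonal]
  rw [Multiset.map_map]
  rfl

lemma mySymRoots {n : Type*} [Fintype n] [DecidableEq n] (A : Matrix n n ℝ)
    (hA : A.IsHermitian) :
    A.charpoly.roots = Finset.univ.val.map hA.eigenvalues := by
  rw [mySymCharpoly A hA, Polynomial.roots_multiset_prod_X_sub_C]

lemma charpoly_deceq {n : Type*} [Fintype n] (i1 i2 : DecidableEq n) (M : Matrix n n ℝ) :
    @Matrix.charpoly ℝ _ n i1 _ M = @Matrix.charpoly ℝ _ n i2 _ M := by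
  have h : i1 = i2 := by
    funext a b
    exact Subsingleton.elim _ _
  rw [h]

lemma gdeg_eq_sum {V : Type*} [Fintype V] (G : SimpleGraph V) (x : V) :
    gdeg G x = ∑ y, if G.Adj x y then 1 else 0 := by
  rw [gdeg, Finset.card_filter]

@[simp] lemma sgJoin_adj_inl_inl {α β : Type*} (G₁ : SimpleGraph α) (G₂ : SimpleGraph β)
    (a b : α) : (sgJoin G₁ G₂).Adj (Sum.inl a) (Sum.inl b) ↔ G₁.Adj a b := Iff.rfl
@[simp] lemma sgJoin_adj_inl_inr {α β : Type*} (G₁ : SimpleGraph α) (G₂ : SimpleGraph β)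
    (a : α) (b : β) : (sgJoin G₁ G₂).Adj (Sum.inl a) (Sum.inr b) := trivial
@[simp] lemma sgJoin_adj_inr_inl {α β : Type*} (G₁ : SimpleGraph α) (G₂ : SimpleGraph β)
    (a : β) (b : α) : (sgJoin G₁ G₂).Adj (Sum.inr a) (Sum.inl b) := trivial
@[simp] lemma sgJoin_adj_inr_inr {α β : Type*} (G₁ : SimpleGraph α) (G₂ : SimpleGraph β)
    (a b : β) : (sgJoin G₁ G₂).Adj (Sum.inr a) (Sum.inr b) ↔ G₂.Adj a b := Iff.rfl

lemma gdeg_sgJoin_inl {α β : Type*} [Fintype α] [Fintype β] (G₁ : SimpleGraph α)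
    (G₂ : SimpleGraph β) (a : α) :
    gdeg (sgJoin G₁ G₂) (Sum.inl a) = gdeg G₁ a + Fintype.card β := by
  rw [gdeg_eq_sum, Fintype.sum_sum_type, gdeg_eq_sum]
  have h1 : (∑ y : α, if (sgJoin G₁ G₂).Adj (Sum.inl a) (Sum.inl y) then 1 else 0)
      = ∑ y : α, if G₁.Adj a y then 1 else 0 := by
    apply Finset.sum_congr rfl
    intro y _
    simp [sgJoin_adj_inl_inl]
  rw [h1]
  simp [sgJoin_adj_inl_inr]

lemma gdeg_sgJoin_inr {α β : Type*} [Fintype α] [Fintype β] (G₁ : SimpleGraph α)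
    (G₂ : SimpleGraph β) (b : β) :
    gdeg (sgJoin G₁ G₂) (Sum.inr b) = gdeg G₂ b + Fintype.card α := by
  rw [gdeg_eq_sum, Fintype.sum_sum_type, gdeg_eq_sum]
  have h1 : (∑ y : β, if (sgJoin G₁ G₂).Adj (Sum.inr b) (Sum.inr y) then 1 else 0)
      = ∑ y : β, if G₂.Adj b y then 1 else 0 := by
    apply Finset.sum_congr rfl
    intro y _
    simp [sgJoin_adj_inr_inr]
  rw [h1]
  simp [sgJoin_adj_inr_inl, add_comm]

lemma gdeg_top_bool (a : Bool) : gdeg (⊤ : SimpleGraph Bool) a = 1 := by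
  rw [gdeg_eq_sum, Fintype.sum_bool]
  cases a <;> simp

lemma xsub_qMat_join {W : Type*} [Fintype W] [DecidableEq W] (H₂ : SimpleGraph W) (x : ℝ) :
    x • (1 : Matrix (Bool ⊕ W) (Bool ⊕ W) ℝ) - qMat ℝ (sgJoin (⊤ : SimpleGraph Bool) H₂)
    = fromBlocks
        (Matrix.of fun i j : Bool => if i = j then x - (1 + (Fintype.card W : ℝ)) else -1)
        (Matrix.of fun _ _ => (-1 : ℝ)) (Matrix.of fun _ _ => (-1 : ℝ))
        ((x - 2) • (1 : Matrix W W ℝ) - qMat ℝ H₂) := by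
  ext i j
  rcases i with i | i <;> rcases j with j | j
  · by_cases h : i = j <;>
      simp [h, qMat, adjMat, fromBlocks, Matrix.one_apply, Matrix.diagonal_apply,
        gdeg_sgJoin_inl, gdeg_top_bool]
  · simp [qMat, adjMat, fromBlocks, Matrix.one_apply, Matrix.diagonal_apply]
  · simp [qMat, adjMat, fromBlocks, Matrix.one_apply, Matrix.diagonal_apply]
  · by_cases h : i = j <;>
      simp [h, qMat, adjMat, fromBlocks, Matrix.one_apply, Matrix.diagonal_apply,
        gdeg_sgJoin_inr] <;> push_cast <;> ring

lemma qMat_isHermitian {W : Type*} [Fintype W] (H₂ : SimpleGraph W) :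
    (qMat ℝ H₂).IsHermitian := by
  unfold Matrix.IsHermitian
  ext i j
  by_cases h : i = j
  · simp [h, Matrix.conjTranspose_apply, qMat, adjMat, Matrix.diagonal_apply]
  · have h' : ¬ j = i := fun e => h e.symm
    simp [h, h', Matrix.conjTranspose_apply, qMat, adjMat, Matrix.diagonal_apply,
      SimpleGraph.adj_comm]

lemma det_bool {M : Matrix Bool Bool ℝ} :
    M.det = M false false * M true true - M false true * M true false := by
  rw [← Matrix.det_submatrix_equiv_self finTwoEquiv, Matrix.det_fin_two]
  simp [finTwoEquiv]

end Helpers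

set_option maxHeartbeats 1000000

/-- equation (3): signless Laplacian spectrum of the join of an edge with a
regular graph. -/
theorem signlessLap_spec_edgeJoin_regular
    {W : Type*} [Fintype W] [DecidableEq W]
    (m r₂ : ℕ) (hm : Fintype.card W = m - 2) (hm3 : 3 ≤ m)
    (H₂ : SimpleGraph W) (hreg : IsReg H₂ r₂)
    (ζ η : ℝ)
    (hζη : ∀ x : ℝ,
      (x - (2 * (r₂ : ℝ) + 2)) * (x - (m : ℝ)) - 2 * ((m : ℝ) - 2) = (x - ζ) * (x - η)) :
    qSpec (sgJoin (⊤ : SimpleGraph Bool) H₂)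
      = ((qSpec H₂).erase (2 * (r₂ : ℝ))).map (fun q => q + 2)
        + ({(m : ℝ) - 2, ζ, η} : Multiset ℝ) := by
  classical
  have hn2 : 2 ≤ m := by omega
  set Q₂ := qMat ℝ H₂ with hQ₂
  have hcard : ((Fintype.card W : ℕ) : ℝ) = (m : ℝ) - 2 := by
    rw [hm, Nat.cast_sub hn2]; norm_num
  have hWpos : 0 < Fintype.card W := by rw [hm]; omega
  obtain ⟨w₀⟩ : Nonempty W := Fintype.card_pos_iff.mp hWpos
  have hherm : Q₂.IsHermitian := qMat_isHermitian H₂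
  -- row sums of Q₂
  have hrowA : ∀ w : W, ∑ w', adjMat ℝ H₂ w w' = (r₂ : ℝ) := by
    intro w
    have h1 : ∑ w', adjMat ℝ H₂ w w' = ((gdeg H₂ w : ℕ) : ℝ) := by
      rw [gdeg_eq_sum, Nat.cast_sum]
      apply Finset.sum_congr rfl
      intro y _
      simp [adjMat]
    rw [h1, hreg w]
  have hrowQ : ∀ w : W, ∑ w', Q₂ w w' = 2 * (r₂ : ℝ) := by
    intro w
    rw [hQ₂]
    unfold qMat
    simp only [Matrix.add_apply]
    rw [Finset.sum_add_distrib, hrowA w]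
    simp [Matrix.diagonal_apply, hreg w]
    ring
  have hcp₂ : Q₂.charpoly
      = ((qSpec H₂).map (fun r => Polynomial.X - Polynomial.C r)).prod := by
    have h1 : qSpec H₂ = Finset.univ.val.map hherm.eigenvalues := by
      unfold qSpec
      rw [charpoly_deceq _ inferInstance (qMat ℝ H₂)]
      exact mySymRoots Q₂ hherm
    rw [h1]
    exact mySymCharpoly Q₂ hherm
  have hcpne : Q₂.charpoly ≠ 0 := (Matrix.charpoly_monic Q₂).ne_zero
  have hroot2r : Q₂.charpoly.eval (2 * (r₂ : ℝ)) = 0 := by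
    rw [myEvalCharpoly]
    set M := (2 * (r₂ : ℝ)) • (1 : Matrix W W ℝ) - Q₂ with hM
    have hMv : M *ᵥ (fun _ => (1 : ℝ)) = 0 := by
      funext w
      have h2 : ∑ w', M w w' = 0 := by
        simp only [hM, Matrix.sub_apply, Matrix.smul_apply, Matrix.one_apply]
        rw [Finset.sum_sub_distrib, hrowQ w]
        simp
      simpa [Matrix.mulVec, dotProduct] using h2
    by_contra hdet
    haveI := M.invertibleOfIsUnitDet (isUnit_iff_ne_zero.2 hdet)
    have h3 : (fun _ => (1 : ℝ)) = (0 : W → ℝ) := by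
      calc (fun _ => (1 : ℝ)) = (⅟M * M) *ᵥ (fun _ => (1 : ℝ)) := by
            rw [invOf_mul_self, Matrix.one_mulVec]
        _ = ⅟M *ᵥ (M *ᵥ (fun _ => (1 : ℝ))) := (Matrix.mulVec_mulVec _ _ _).symm
        _ = (0 : W → ℝ) := by rw [hMv, Matrix.mulVec_zero]
    have := congrFun h3 w₀
    norm_num at this
  have hqs : qSpec H₂ = Q₂.charpoly.roots := by
    unfold qSpec
    rw [charpoly_deceq _ inferInstance (qMat ℝ H₂)]
  have hmem : (2 * (r₂ : ℝ)) ∈ qSpec H₂ := by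
    rw [hqs, Polynomial.mem_roots hcpne]
    exact hroot2r
  -- the main pointwise determinant identity
  have hmain : ∀ x : ℝ, Q₂.charpoly.eval (x - 2) ≠ 0 →
      (qMat ℝ (sgJoin (⊤ : SimpleGraph Bool) H₂)).charpoly.eval x
      = (((((qSpec H₂).erase (2 * (r₂ : ℝ))).map (fun q => q + 2)
          + ({(m : ℝ) - 2, ζ, η} : Multiset ℝ)).map
            (fun a => Polynomial.X - Polynomial.C a)).prod).eval x := by
    intro x hx
    set c := x - 2 - 2 * (r₂ : ℝ) with hcdef
    set D' := (x - 2) • (1 : Matrix W W ℝ) - Q₂ with hD'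
    have hdetD : D'.det ≠ 0 := by
      rw [hD', ← myEvalCharpoly]
      exact hx
    haveI : Invertible D' := D'.invertibleOfIsUnitDet (isUnit_iff_ne_zero.2 hdetD)
    have hc : c ≠ 0 := by
      intro h
      apply hx
      have hx2 : x - 2 = 2 * (r₂ : ℝ) := by rw [hcdef] at h; linarith
      rw [hx2]
      exact hroot2r
    have hD'v : D' *ᵥ (fun _ => (1 : ℝ)) = fun _ => c := by
      funext w
      have h2 : ∑ w', D' w w' = c := by
        simp only [hD', Matrix.sub_apply, Matrix.smul_apply, Matrix.one_apply]
        rw [Finset.sum_sub_distrib, hrowQ w]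
        simp [hcdef]
      simpa [Matrix.mulVec, dotProduct] using h2
    have hinv : D'⁻¹ *ᵥ (fun _ => (1 : ℝ)) = fun _ => c⁻¹ := by
      have h2 : D' *ᵥ (fun _ => c⁻¹) = fun _ => (1 : ℝ) := by
        have h3 : (fun _ : W => c⁻¹) = c⁻¹ • (fun _ : W => (1 : ℝ)) := by
          funext w; simp
        rw [h3, Matrix.mulVec_smul, hD'v]
        funext w
        simp [inv_mul_cancel₀ hc]
      calc D'⁻¹ *ᵥ (fun _ => (1 : ℝ)) = D'⁻¹ *ᵥ (D' *ᵥ (fun _ => c⁻¹)) := by rw [h2]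
        _ = (D'⁻¹ * D') *ᵥ (fun _ => c⁻¹) := Matrix.mulVec_mulVec _ _ _
        _ = fun _ => c⁻¹ := by
            rw [Matrix.nonsing_inv_mul D' (isUnit_iff_ne_zero.2 hdetD), Matrix.one_mulVec]
    have hsum : ∑ k, ∑ l, D'⁻¹ k l = (Fintype.card W : ℝ) * c⁻¹ := by
      have h4 : ∀ k, ∑ l, D'⁻¹ k l = c⁻¹ := by
        intro k
        have h5 := congrFun hinv k
        simpa [Matrix.mulVec, dotProduct] using h5
      rw [Finset.sum_congr rfl (fun k _ => h4 k)]
      simp [Finset.card_univ, nsmul_eq_mul]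
    -- determinant of the big matrix
    rw [myEvalCharpoly, xsub_qMat_join, Matrix.det_fromBlocks₂₂, Matrix.invOf_eq_nonsing_inv]
    have hblock :
        (Matrix.of fun i j : Bool => if i = j then x - (1 + (Fintype.card W : ℝ)) else -1)
          - (Matrix.of fun _ _ => (-1 : ℝ) : Matrix Bool W ℝ)
            * ((x - 2) • (1 : Matrix W W ℝ) - qMat ℝ H₂)⁻¹
            * (Matrix.of fun _ _ => (-1 : ℝ) : Matrix W Bool ℝ)
        = Matrix.of (fun i j : Bool =>
            (if i = j then x - (1 + (Fintype.card W : ℝ)) else -1)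
              - (Fintype.card W : ℝ) * c⁻¹) := by
      ext i j
      have hBD : ((Matrix.of fun _ _ => (-1 : ℝ) : Matrix Bool W ℝ) * D'⁻¹
            * (Matrix.of fun _ _ => (-1 : ℝ) : Matrix W Bool ℝ)) i j
          = ∑ l, ∑ k, D'⁻¹ k l := by
        simp [Matrix.mul_apply]
      have hBD2 : ((Matrix.of fun _ _ => (-1 : ℝ) : Matrix Bool W ℝ) * D'⁻¹
            * (Matrix.of fun _ _ => (-1 : ℝ) : Matrix W Bool ℝ)) i j
          = (Fintype.card W : ℝ) * c⁻¹ := by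
        rw [hBD, Finset.sum_comm, hsum]
      rw [← hQ₂, ← hD']
      simp only [Matrix.sub_apply, Matrix.of_apply, hBD2]
    rw [← hQ₂, ← hD', hblock, det_bool]
    simp only [Matrix.of_apply]
    -- evaluate det D'
    have hDdet : D'.det = c * (((qSpec H₂).erase (2 * (r₂ : ℝ))).map
        (fun q => x - (q + 2))).prod := by
      have h6 : D'.det = Q₂.charpoly.eval (x - 2) := by rw [hD', myEvalCharpoly]
      rw [h6, hcp₂]
      conv_lhs => rw [← Multiset.cons_erase hmem]
      rw [Multiset.map_cons, Multiset.prod_cons, Polynomial.eval_mul]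
      congr 1
      · simp [hcdef]
      · rw [Polynomial.eval_multiset_prod, Multiset.map_map]
        apply congrArg
        apply Multiset.map_congr rfl
        intro q hq
        simp only [Function.comp_apply]
        rw [Polynomial.eval_sub, Polynomial.eval_X, Polynomial.eval_C]
        ring
    -- evaluate the target polynomial
    have hqeval : (((((qSpec H₂).erase (2 * (r₂ : ℝ))).map (fun q => q + 2)
          + ({(m : ℝ) - 2, ζ, η} : Multiset ℝ)).map
            (fun a => Polynomial.X - Polynomial.C a)).prod).eval x
        = (((qSpec H₂).erase (2 * (r₂ : ℝ))).map (fun q => x - (q + 2))).prod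
          * ((x - ((m : ℝ) - 2)) * ((x - ζ) * (x - η))) := by
      rw [Multiset.map_add, Multiset.prod_add, Polynomial.eval_mul, Multiset.map_map]
      congr 1
      · rw [Polynomial.eval_multiset_prod, Multiset.map_map]
        apply congrArg
        apply Multiset.map_congr rfl
        intro q hq
        simp only [Function.comp_apply]
        rw [Polynomial.eval_sub, Polynomial.eval_X, Polynomial.eval_C]
      · show ((({(m : ℝ) - 2, ζ, η} : Multiset ℝ)).map
            (fun a => Polynomial.X - Polynomial.C a)).prod.eval x = _
        simp only [Multiset.insert_eq_cons, Multiset.map_cons, Multiset.prod_cons,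
          Multiset.map_singleton, Multiset.prod_singleton]
        simp
    rw [hqeval, hDdet]
    -- final algebra
    have key : c * ((x - (1 + (Fintype.card W : ℝ)) - (Fintype.card W : ℝ) * c⁻¹)
          * (x - (1 + (Fintype.card W : ℝ)) - (Fintype.card W : ℝ) * c⁻¹)
        - (-1 - (Fintype.card W : ℝ) * c⁻¹) * (-1 - (Fintype.card W : ℝ) * c⁻¹))
        = (x - ((m : ℝ) - 2)) * ((x - ζ) * (x - η)) := by
      have hc' : x - 2 - 2 * (r₂ : ℝ) ≠ 0 := hc
      rw [← hζη x, hcard, hcdef]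
      field_simp
      ring
    calc c * (((qSpec H₂).erase (2 * (r₂ : ℝ))).map (fun q => x - (q + 2))).prod
          * ((x - (1 + (Fintype.card W : ℝ)) - (Fintype.card W : ℝ) * c⁻¹)
              * (x - (1 + (Fintype.card W : ℝ)) - (Fintype.card W : ℝ) * c⁻¹)
            - (-1 - (Fintype.card W : ℝ) * c⁻¹) * (-1 - (Fintype.card W : ℝ) * c⁻¹))
        = (((qSpec H₂).erase (2 * (r₂ : ℝ))).map (fun q => x - (q + 2))).prod
            * (c * ((x - (1 + (Fintype.card W : ℝ)) - (Fintype.card W : ℝ) * c⁻¹)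
              * (x - (1 + (Fintype.card W : ℝ)) - (Fintype.card W : ℝ) * c⁻¹)
            - (-1 - (Fintype.card W : ℝ) * c⁻¹) * (-1 - (Fintype.card W : ℝ) * c⁻¹))) := by
          ring
      _ = _ := by rw [key]
  -- assemble the polynomial identity
  have hpoly : (qMat ℝ (sgJoin (⊤ : SimpleGraph Bool) H₂)).charpoly
      = (((((qSpec H₂).erase (2 * (r₂ : ℝ))).map (fun q => q + 2)
          + ({(m : ℝ) - 2, ζ, η} : Multiset ℝ)).map
            (fun a => Polynomial.X - Polynomial.C a)).prod) := by
    apply Polynomial.eq_of_infinite_eval_eq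
    have hfin : {x : ℝ | Q₂.charpoly.eval (x - 2) = 0}.Finite := by
      apply Set.Finite.subset ((Polynomial.finite_setOf_isRoot hcpne).image (fun y => y + 2))
      intro x hx
      exact ⟨x - 2, hx, by ring⟩
    have hinf : {x : ℝ | Q₂.charpoly.eval (x - 2) ≠ 0}.Infinite := by
      have h7 := hfin.infinite_compl
      have h9 : {x : ℝ | Q₂.charpoly.eval (x - 2) = 0}ᶜ
          = {x : ℝ | Q₂.charpoly.eval (x - 2) ≠ 0} := by
        ext x
        simp
      rwa [h9] at h7
    exact hinf.mono (fun x hx => hmain x hx)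
  have hqsJoin : qSpec (sgJoin (⊤ : SimpleGraph Bool) H₂)
      = (qMat ℝ (sgJoin (⊤ : SimpleGraph Bool) H₂)).charpoly.roots := by
    unfold qSpec
    rw [charpoly_deceq _ inferInstance (qMat ℝ (sgJoin (⊤ : SimpleGraph Bool) H₂))]
  rw [hqsJoin, hpoly, Polynomial.roots_multiset_prod_X_sub_C]
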